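/- Let n be odd, let k be a positive integer with gcd(k, n) = 1, and let b, c be elements of L = GF(2^n), not both zero. Then the equation b u^{2^k} + b^{2^{-k}} u^{2^{-k}} + c u^{2^{2k}} + c^{2^{-2k}} u^{2^{-2k}} = 0 has at most 16 solutions u in L. -/

import Mathlib

open Finset

section Aux

variable {L : Type*} [Field L]

/-- divided coefficients for right division by `x^{2^k} + c x`. -/
noncomputable def bco (a : ℕ → L) (c : L) (k d : ℕ) : ℕ → L := fun j =>
  Nat.rec (a (d + 1)) (fun m gm => a (d - m) + gm * c ^ 2 ^ (k * (d - m))) (d - j)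

lemma bco_top (a : ℕ → L) (c : L) (k d : ℕ) : bco a c k d d = a (d + 1) := by
  simp [bco]

lemma bco_step (a : ℕ → L) (c : L) (k d j : ℕ) (hj : j < d) :
    bco a c k d j = a (j + 1) + bco a c k d (j + 1) * c ^ 2 ^ (k * (j + 1)) := by
  have h1 : d - j = (d - (j + 1)) + 1 := by omega
  have h2 : d - (d - (j + 1)) = j + 1 := by omega
  conv_lhs => rw [bco, h1]
  show a (d - (d - (j+1))) + (Nat.rec (a (d+1)) (fun m gm => a (d - m) + gm * c ^ 2 ^ (k * (d - m))) (d - (j+1)) : L) * c ^ 2 ^ (k * (d - (d - (j+1)))) = _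
  rw [h2]
  rfl

/-- modified coefficients: zero above degree d -/
noncomputable def Bco (a : ℕ → L) (c : L) (k d : ℕ) : ℕ → L := fun j =>
  if j ≤ d then bco a c k d j else 0

lemma Bco_step (a : ℕ → L) (c : L) (k d j : ℕ) (hj : j ≤ d) :
    Bco a c k d j = a (j + 1) + Bco a c k d (j + 1) * c ^ 2 ^ (k * (j + 1)) := by
  rcases lt_or_eq_of_le hj with h | h
  · simp only [Bco, if_pos hj, if_pos (by omega : j + 1 ≤ d)]
    exact bco_step a c k d j h
  · subst h
    simp only [Bco, if_pos le_rfl, if_neg (by omega : ¬ j + 1 ≤ j)]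
    rw [bco_top]; ring

variable [CharP L 2]

lemma expand_pow (c x : L) (k j : ℕ) :
    (x ^ 2 ^ k + c * x) ^ 2 ^ (k * j)
      = x ^ 2 ^ (k * (j + 1)) + c ^ 2 ^ (k * j) * x ^ 2 ^ (k * j) := by
  have : Fact (Nat.Prime 2) := ⟨Nat.prime_two⟩
  rw [add_pow_char_pow, mul_pow, ← pow_mul, ← pow_add]
  congr 2
  ring

lemma divide_id (a : ℕ → L) (c : L) (k d : ℕ) (x : L) :
    ∑ i ∈ range (d + 2), a i * x ^ 2 ^ (k * i)
      = ∑ j ∈ range (d + 1), Bco a c k d j * (x ^ 2 ^ k + c * x) ^ 2 ^ (k * j)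
        + (a 0 + Bco a c k d 0 * c) * x := by
  have two : (2 : L) = 0 := CharTwo.two_eq_zero
  set B := Bco a c k d with hB
  set T2 := ∑ j ∈ range (d + 1), B j * c ^ 2 ^ (k * j) * x ^ 2 ^ (k * j) with hT2
  set T2' := ∑ j ∈ range (d + 1), B (j + 1) * c ^ 2 ^ (k * (j + 1)) * x ^ 2 ^ (k * (j + 1)) with hT2'
  have E1 : ∑ j ∈ range (d + 1), B j * (x ^ 2 ^ k + c * x) ^ 2 ^ (k * j)
      = (∑ j ∈ range (d + 1), B j * x ^ 2 ^ (k * (j + 1))) + T2 := by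
    rw [hT2, ← Finset.sum_add_distrib]
    refine Finset.sum_congr rfl fun j _ => ?_
    rw [expand_pow]; ring
  have E2 : (∑ j ∈ range (d + 1), B j * x ^ 2 ^ (k * (j + 1)))
      = (∑ j ∈ range (d + 1), a (j + 1) * x ^ 2 ^ (k * (j + 1))) + T2' := by
    rw [hT2', ← Finset.sum_add_distrib]
    refine Finset.sum_congr rfl fun j hj => ?_
    rw [hB, Bco_step a c k d j (Nat.lt_succ_iff.mp (Finset.mem_range.mp hj))]
    ring
  have E3 : ∑ i ∈ range (d + 2), B i * c ^ 2 ^ (k * i) * x ^ 2 ^ (k * i)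
      = T2' + B 0 * c * x := by
    rw [Finset.sum_range_succ', hT2']
    congr 1
    simp
  have E4 : ∑ i ∈ range (d + 2), B i * c ^ 2 ^ (k * i) * x ^ 2 ^ (k * i) = T2 := by
    rw [Finset.sum_range_succ, hT2]
    have hB0 : B (d + 1) = 0 := by simp [hB, Bco]
    rw [hB0]; ring
  have E5 : ∑ i ∈ range (d + 2), a i * x ^ 2 ^ (k * i)
      = (∑ j ∈ range (d + 1), a (j + 1) * x ^ 2 ^ (k * (j + 1))) + a 0 * x := by
    rw [Finset.sum_range_succ']
    congr 1
    simp
  linear_combination E5 - E1 - E2 - E3 + E4 - T2' * two - B 0 * c * x * two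

end Aux

section Ker

variable {L : Type*} [Field L] [Finite L] [CharP L 2]

lemma kerbound (k : ℕ)
    (hfix : ∀ x : L, x ^ 2 ^ k = x → x = 0 ∨ x = 1) :
    ∀ (d : ℕ) (a : ℕ → L), (∃ i, i ≤ d ∧ a i ≠ 0) →
      {x : L | ∑ i ∈ range (d + 1), a i * x ^ 2 ^ (k * i) = 0}.ncard ≤ 2 ^ d := by
  classical
  have fp : Fact (Nat.Prime 2) := ⟨Nat.prime_two⟩
  have two : (2 : L) = 0 := CharTwo.two_eq_zero
  intro d
  induction d with
  | zero =>
    rintro a ⟨i, hi, hai⟩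
    interval_cases i
    have hsub : {x : L | ∑ i ∈ range (0 + 1), a i * x ^ 2 ^ (k * i) = 0} ⊆ {0} := by
      intro x hx
      simp only [Set.mem_setOf_eq, Nat.zero_add, Finset.sum_range_one, Nat.mul_zero, pow_zero, pow_one] at hx
      have := mul_eq_zero.mp hx
      simp only [Set.mem_singleton_iff]
      tauto
    calc {x : L | ∑ i ∈ range (0 + 1), a i * x ^ 2 ^ (k * i) = 0}.ncard
        ≤ ({0} : Set L).ncard := Set.ncard_le_ncard hsub (Set.finite_singleton 0)
      _ = 1 := Set.ncard_singleton 0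
      _ ≤ 2 ^ 0 := by norm_num
  | succ d ih =>
    rintro a ha
    by_cases hS : ∀ x : L, (∑ i ∈ range (d + 1 + 1), a i * x ^ 2 ^ (k * i) = 0) → x = 0
    · have hsub : {x : L | ∑ i ∈ range (d + 1 + 1), a i * x ^ 2 ^ (k * i) = 0} ⊆ {0} := hS
      calc {x : L | ∑ i ∈ range (d + 1 + 1), a i * x ^ 2 ^ (k * i) = 0}.ncard
          ≤ ({0} : Set L).ncard := Set.ncard_le_ncard hsub (Set.finite_singleton 0)
        _ = 1 := Set.ncard_singleton 0
        _ ≤ 2 ^ (d + 1) := Nat.one_le_two_pow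
    · push_neg at hS
      obtain ⟨v, hv, hv0⟩ := hS
      set c : L := v ^ 2 ^ k / v with hc
      have hcv : c * v = v ^ 2 ^ k := by
        rw [hc]; field_simp
      have hQv : v ^ 2 ^ k + c * v = 0 := by
        rw [hcv, CharTwo.add_self_eq_zero]
      -- remainder is zero
      have hr : a 0 + Bco a c k d 0 * c = 0 := by
        have h0 := divide_id a c k d v
        have hz : ∀ j ∈ range (d+1),
            Bco a c k d j * (v ^ 2 ^ k + c * v) ^ 2 ^ (k*j) = 0 := by
          intro j _
          rw [hQv, zero_pow (by positivity), mul_zero]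
        rw [hv, Finset.sum_eq_zero hz, zero_add] at h0
        rcases mul_eq_zero.mp h0.symm with h | h
        · exact h
        · exact absurd h hv0
      -- the divided identity without remainder
      have hdiv : ∀ x : L, ∑ i ∈ range (d + 1 + 1), a i * x ^ 2 ^ (k * i)
          = ∑ j ∈ range (d + 1), Bco a c k d j * (x ^ 2 ^ k + c * x) ^ 2 ^ (k * j) := by
        intro x
        rw [divide_id a c k d x, hr, zero_mul, add_zero]
      -- Bco is not identically zero below d
      have hBne : ∃ j, j ≤ d ∧ Bco a c k d j ≠ 0 := by
        by_contra h
        push_neg at h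
        obtain ⟨i, hi, hai⟩ := ha
        apply hai
        match i, hi with
        | 0, _ =>
          have h0 : Bco a c k d 0 = 0 := h 0 (Nat.zero_le d)
          rw [h0, zero_mul, add_zero] at hr
          exact hr
        | (j+1), hj1 =>
          have hj : j ≤ d := by omega
          have hstep := Bco_step a c k d j hj
          rw [h j hj] at hstep
          have hB1 : Bco a c k d (j+1) = 0 := by
            by_cases hj2 : j + 1 ≤ d
            · exact h _ hj2
            · simp [Bco, hj2]
          rw [hB1, zero_mul, add_zero] at hstep
          exact hstep.symm
      -- inner kernel bound
      have hinner := ih (Bco a c k d) hBne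
      -- kernel of Q is {0, v}
      have hker : ∀ z : L, z ^ 2 ^ k + c * z = 0 → z = 0 ∨ z = v := by
        intro z hz
        have hzv : (z / v) ^ 2 ^ k = z / v := by
          rw [div_pow]
          have hz' : z ^ 2 ^ k = c * z := by
            linear_combination hz - (c * z) * two
          rw [hz', hc]
          field_simp
        rcases hfix _ hzv with h | h
        · left
          rcases div_eq_zero_iff.mp h with h' | h'
          · exact h'
          · exact absurd h' hv0
        · right
          field_simp at h
          exact h
      -- fibers of Q have at most 2 elements
      have hfib : ∀ t : L, ((fun x : L => x ^ 2 ^ k + c * x) ⁻¹' {t}).ncard ≤ 2 := by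
        intro t
        rcases Set.eq_empty_or_nonempty ((fun x : L => x ^ 2 ^ k + c * x) ⁻¹' {t}) with he | ⟨w, hw⟩
        · simp [he]
        · have hw' : w ^ 2 ^ k + c * w = t := hw
          have hsub : ((fun x : L => x ^ 2 ^ k + c * x) ⁻¹' {t}) ⊆ {w, w + v} := by
            intro y hy
            have hy' : y ^ 2 ^ k + c * y = t := hy
            have hyw : (y + w) ^ 2 ^ k + c * (y + w) = 0 := by
              rw [add_pow_char_pow]
              linear_combination hy' + hw' + t * two
            rcases hker _ hyw with h | h
            · left
              have : y = w := by
                have h2 := congrArg (· + w) h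
                simp only [zero_add] at h2
                rw [add_assoc, CharTwo.add_self_eq_zero, add_zero] at h2
                exact h2
              exact this
            · right
              have h2 := congrArg (· + w) h
              rw [add_assoc, add_comm w w, CharTwo.add_self_eq_zero, add_zero] at h2
              rw [Set.mem_singleton_iff, h2, add_comm]
          calc ((fun x : L => x ^ 2 ^ k + c * x) ⁻¹' {t}).ncard
              ≤ ({w, w + v} : Set L).ncard := Set.ncard_le_ncard hsub (Set.toFinite _)
            _ ≤ 2 := by
                apply le_trans (Set.ncard_insert_le _ _)
                simp
      -- combine
      set S := {x : L | ∑ i ∈ range (d + 1 + 1), a i * x ^ 2 ^ (k * i) = 0} with hSdef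
      set S' := {y : L | ∑ j ∈ range (d + 1), Bco a c k d j * y ^ 2 ^ (k * j) = 0} with hS'def
      have hfin1 : S.Finite := Set.toFinite _
      have hfin2 : S'.Finite := Set.toFinite _
      have hmaps : ∀ x ∈ S, (x ^ 2 ^ k + c * x) ∈ S' := by
        intro x hx
        have hd := hdiv x
        simp only [hSdef, hS'def, Set.mem_setOf_eq] at hx ⊢
        rw [← hd]
        exact hx
      have hcard : S.ncard ≤ 2 * S'.ncard := by
        rw [Set.ncard_eq_toFinset_card S hfin1, Set.ncard_eq_toFinset_card S' hfin2]
        have hsub : hfin1.toFinset ⊆ hfin2.toFinset.biUnion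
            (fun t => (Set.toFinite ((fun x : L => x ^ 2 ^ k + c * x) ⁻¹' {t})).toFinset) := by
          intro x hx
          rw [Set.Finite.mem_toFinset] at hx
          rw [Finset.mem_biUnion]
          exact ⟨x ^ 2 ^ k + c * x, by rw [Set.Finite.mem_toFinset]; exact hmaps x hx,
            by rw [Set.Finite.mem_toFinset]; exact rfl⟩
        calc hfin1.toFinset.card ≤ _ := Finset.card_le_card hsub
          _ ≤ ∑ t ∈ hfin2.toFinset,
                (Set.toFinite ((fun x : L => x ^ 2 ^ k + c * x) ⁻¹' {t})).toFinset.card :=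
              Finset.card_biUnion_le
          _ ≤ ∑ t ∈ hfin2.toFinset, 2 := by
              apply Finset.sum_le_sum
              intro t _
              rw [← Set.ncard_eq_toFinset_card _ (Set.toFinite _)]
              exact hfib t
          _ = 2 * hfin2.toFinset.card := by rw [Finset.sum_const, smul_eq_mul, mul_comm]
      calc S.ncard ≤ 2 * S'.ncard := hcard
        _ ≤ 2 * 2 ^ d := Nat.mul_le_mul_left 2 hinner
        _ = 2 ^ (d + 1) := by ring

end Ker

/-- `ipow j x` is `x^{2^{-j}}`, the unique element of `GF(2^n)` whose `2^j`-th power is `x`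
(the inverse of the `j`-th iterate of the Frobenius automorphism). -/
noncomputable def ipow {n : ℕ} (j : ℕ) (x : GaloisField 2 n) : GaloisField 2 n :=
  Function.invFun (fun y : GaloisField 2 n => y ^ 2 ^ j) x

lemma frob_bij {n : ℕ} (j : ℕ) : Function.Bijective (fun y : GaloisField 2 n => y ^ 2 ^ j) := by
  have : Fact (Nat.Prime 2) := ⟨Nat.prime_two⟩
  rw [← Finite.injective_iff_bijective]
  intro x y hxy
  simp only at hxy
  have h1 : (x - y) ^ 2 ^ j = 0 := by rw [sub_pow_char_pow, hxy, sub_self]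
  have h2 : x - y = 0 := pow_eq_zero_iff (by positivity) |>.mp h1
  exact sub_eq_zero.mp h2

lemma ipow_pow {n : ℕ} (j : ℕ) (x : GaloisField 2 n) : (ipow j x) ^ 2 ^ j = x :=
  Function.rightInverse_invFun (frob_bij j).surjective x

/-- The equation `b u^{2^k} + b^{2^{-k}} u^{2^{-k}} + c u^{2^{2k}} + c^{2^{-2k}} u^{2^{-2k}} = 0`
has at most 16 solutions. -/
theorem stmt_14 (n k : ℕ) (hn : Odd n) (hk : 0 < k) (hkn : Nat.gcd k n = 1)
    (b c : GaloisField 2 n) (hbc : ¬(b = 0 ∧ c = 0)) :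
    {u : GaloisField 2 n |
        b * u ^ 2 ^ k + ipow k b * ipow k u + c * u ^ 2 ^ (2 * k) +
          ipow (2 * k) c * ipow (2 * k) u = 0}.ncard ≤ 16 := by
  classical
  have fp : Fact (Nat.Prime 2) := ⟨Nat.prime_two⟩
  have hn0 : n ≠ 0 := by rcases hn with ⟨m, rfl⟩; omega
  letI : Fintype (GaloisField 2 n) := Fintype.ofFinite _
  have hcard : Fintype.card (GaloisField 2 n) = 2 ^ n := by
    rw [← Nat.card_eq_fintype_card]; exact GaloisField.card 2 n hn0
  have hxn : ∀ x : GaloisField 2 n, x ^ 2 ^ n = x := fun x => by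
    conv_lhs => rw [← hcard]
    exact FiniteField.pow_card x
  have iter : ∀ (m : ℕ) (x : GaloisField 2 n), x ^ 2 ^ m = x → ∀ t, x ^ 2 ^ (m * t) = x := by
    intro m x hx t
    induction t with
    | zero => simp
    | succ t iht =>
      have he : 2 ^ (m * (t + 1)) = 2 ^ (m * t) * 2 ^ m := by
        rw [← pow_add]; ring_nf
      rw [he, pow_mul, iht, hx]
  have hst : ∃ s t : ℕ, k * s = n * t + 1 := by
    rcases Nat.lt_or_ge n 2 with h | h
    · have : n = 1 := by omega
      exact ⟨1, k - 1, by subst this; omega⟩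
    · obtain ⟨s, hs⟩ := Nat.exists_mul_mod_eq_one_of_coprime hkn h
      refine ⟨s, k * s / n, ?_⟩
      have h2 := Nat.div_add_mod (k * s) n
      omega
  obtain ⟨s, t, hst⟩ := hst
  have hfix : ∀ x : GaloisField 2 n, x ^ 2 ^ k = x → x = 0 ∨ x = 1 := by
    intro x hx
    have h1 : x ^ 2 ^ (k * s) = x := iter k x hx s
    have h2 : x ^ 2 ^ (n * t) = x := iter n x (hxn x) t
    have hx2 : x ^ 2 = x := by
      have he : 2 ^ (k * s) = 2 ^ (n * t) * 2 := by rw [hst, pow_succ]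
      rw [he, pow_mul, h2] at h1
      exact h1
    have hfac : x * (x - 1) = 0 := by linear_combination hx2
    rcases mul_eq_zero.mp hfac with h | h
    · exact Or.inl h
    · exact Or.inr (sub_eq_zero.mp h)
  set A : ℕ → GaloisField 2 n := fun i =>
    if i = 0 then c else if i = 1 then b ^ 2 ^ k
    else if i = 3 then b ^ 2 ^ (2 * k) else if i = 4 then c ^ 2 ^ (2 * k) else 0 with hA
  have ip1 : ∀ x : GaloisField 2 n, (ipow k x) ^ 2 ^ (2 * k) = x ^ 2 ^ k := by
    intro x
    rw [show (2:ℕ) ^ (2 * k) = 2 ^ k * 2 ^ k by rw [← pow_add]; ring_nf, pow_mul, ipow_pow]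
  have ip2 : ∀ x : GaloisField 2 n, (ipow (2 * k) x) ^ 2 ^ (2 * k) = x := ipow_pow (2 * k)
  have key : ∀ u : GaloisField 2 n,
      (b * u ^ 2 ^ k + ipow k b * ipow k u + c * u ^ 2 ^ (2 * k) +
          ipow (2 * k) c * ipow (2 * k) u) ^ 2 ^ (2 * k)
        = ∑ i ∈ Finset.range (4 + 1), A i * u ^ 2 ^ (k * i) := by
    intro u
    simp only [add_pow_char_pow, mul_pow, ip1, ip2, ← pow_mul, ← pow_add]
    rw [Finset.sum_range_succ, Finset.sum_range_succ, Finset.sum_range_succ,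
      Finset.sum_range_succ, Finset.sum_range_one]
    simp only [hA]
    norm_num
    rw [show k * 3 = k + 2 * k by ring, show k * 4 = 2 * k + 2 * k by ring]
    ring
  have hset : {u : GaloisField 2 n |
        b * u ^ 2 ^ k + ipow k b * ipow k u + c * u ^ 2 ^ (2 * k) +
          ipow (2 * k) c * ipow (2 * k) u = 0}
      = {u : GaloisField 2 n | ∑ i ∈ Finset.range (4 + 1), A i * u ^ 2 ^ (k * i) = 0} := by
    ext u
    simp only [Set.mem_setOf_eq]
    constructor
    · intro h
      rw [← key u, h]
      exact zero_pow (by positivity)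
    · intro h
      have hk2 := key u
      rw [h] at hk2
      exact pow_eq_zero_iff (by positivity) |>.mp hk2
  have hAne : ∃ i, i ≤ 4 ∧ A i ≠ 0 := by
    by_cases hb : b = 0
    · have hc : c ≠ 0 := fun h => hbc ⟨hb, h⟩
      exact ⟨0, by norm_num, by simp [hA, hc]⟩
    · exact ⟨1, by norm_num, by simpa [hA] using pow_ne_zero (2^k) hb⟩
  rw [hset]
  have := kerbound (L := GaloisField 2 n) k hfix 4 A hAne
  norm_num at this ⊢
  exact this
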